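/- Let e ∈ F_q^N be fixed of Hamming weight t_e, and let c be drawn uniformly at random from the vectors of F_q^N of Hamming weight t_c. Then the probability that wt(e + c) = wt(e) equals Σ_{z=0}^{⌊t_c/2⌋} [C(t_e,z) · C(N−t_e,z) · C(t_e−z, t_c−2z) · (q−2)^{t_c−2z}] / [C(N,t_c) · (q−1)^{t_c−z}]. -/

import Mathlib

open Finset

namespace Stmt17Aux

set_option linter.unusedSectionVars false
set_option linter.unnecessarySeqFocus false

variable {F : Type*} [Field F] [Fintype F] [DecidableEq F] {N : ℕ}

def As (e c : Fin N → F) : Finset (Fin N) := univ.filter (fun i => e i ≠ 0 ∧ c i = -e i)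
def Ds (e c : Fin N → F) : Finset (Fin N) :=
  univ.filter (fun i => e i ≠ 0 ∧ c i ≠ 0 ∧ c i ≠ -e i)
def Bs (e c : Fin N → F) : Finset (Fin N) := univ.filter (fun i => e i = 0 ∧ c i ≠ 0)
def Se (e : Fin N → F) : Finset (Fin N) := univ.filter (fun i => e i ≠ 0)

lemma hammingNorm_eq (c : Fin N → F) : hammingNorm c = (univ.filter (fun i => c i ≠ 0)).card := rfl

lemma wt_eq (e c : Fin N → F) :
    hammingNorm c = (As e c).card + (Ds e c).card + (Bs e c).card := by
  rw [hammingNorm_eq]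
  rw [← Finset.card_union_of_disjoint, ← Finset.card_union_of_disjoint]
  · congr 1
    ext i
    simp only [As, Ds, Bs, mem_filter, mem_union, mem_univ, true_and]
    by_cases h : e i = 0 <;> by_cases h2 : c i = 0 <;>
      simp [h, h2, neg_eq_zero] <;> tauto
  · simp only [Finset.disjoint_left, As, Ds, Bs, mem_filter, mem_union, mem_univ, true_and]
    tauto
  · simp only [Finset.disjoint_left, As, Ds, mem_filter, mem_univ, true_and]
    tauto

lemma wt_add_eq (e c : Fin N → F) :
    hammingNorm (e + c) = ((Se e).card - (As e c).card) + (Bs e c).card := by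
  rw [hammingNorm_eq, ← Finset.card_sdiff_of_subset, ← Finset.card_union_of_disjoint]
  · congr 1
    ext i
    simp only [Se, As, Bs, mem_union, mem_sdiff, mem_filter, mem_univ, true_and,
      Pi.add_apply]
    by_cases h : e i = 0
    · simp [h]
    · constructor
      · intro hne
        refine Or.inl ⟨h, fun hc => ?_⟩
        exact hne (by rw [hc.2]; ring)
      · rintro (⟨-, hni⟩ | ⟨h0, -⟩)
        · intro hec
          exact hni ⟨h, by linear_combination hec⟩
        · exact absurd h0 h
  · simp only [Finset.disjoint_left, Se, As, Bs, mem_sdiff, mem_filter, mem_univ, true_and]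
    tauto
  · simp only [As, Se, Finset.subset_iff, mem_filter, mem_univ, true_and]
    tauto

def ts (e : Fin N → F) (A D B : Finset (Fin N)) (i : Fin N) : Finset F :=
  if i ∈ A then {-e i} else if i ∈ D then ({0, -e i}ᶜ : Finset F)
  else if i ∈ B then ({0}ᶜ : Finset F) else {0}

lemma shape_eq_iff (e c : Fin N → F) (A D B : Finset (Fin N))
    (hA : ∀ i ∈ A, e i ≠ 0) (hD : ∀ i ∈ D, e i ≠ 0) (hB : ∀ i ∈ B, e i = 0)
    (hAD : Disjoint A D) :
    (As e c = A ∧ Ds e c = D ∧ Bs e c = B) ↔ ∀ i, c i ∈ ts e A D B i := by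
  rw [Finset.ext_iff, Finset.ext_iff, Finset.ext_iff, ← forall_and, ← forall_and]
  refine forall_congr' fun i => ?_
  have hADi : i ∈ A → i ∉ D := fun hiA hiD => Finset.disjoint_left.mp hAD hiA hiD
  have key : e i ≠ 0 → (c i = -e i → c i ≠ 0) := fun h hc => by simp [hc, h]
  by_cases h1 : i ∈ A <;> by_cases h2 : i ∈ D <;> by_cases h3 : i ∈ B <;>
    simp only [ts, As, Ds, Bs, mem_filter, mem_univ, true_and, h1, h2, h3,
      if_true, if_false, mem_singleton, mem_compl, mem_insert, not_or, iff_true,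
      iff_false] <;>
    first
      | (exact absurd h2 (hADi h1))
      | (exact absurd (hB i h3) (hA i h1))
      | (exact absurd (hB i h3) (hD i h2))
      | (have := hA i h1; tauto)
      | (have := hD i h2; have := key (hD i h2); tauto)
      | (have := hB i h3; tauto)
      | (by_cases h : e i = 0 <;> [skip; have := key h] <;> simp [h] <;> tauto)

end Stmt17Aux

namespace Stmt17Aux
variable {F : Type*} [Field F] [Fintype F] [DecidableEq F] {N : ℕ}

lemma card_ts (e : Fin N → F) (A D B : Finset (Fin N))
    (hA : ∀ i ∈ A, e i ≠ 0) (hD : ∀ i ∈ D, e i ≠ 0) (hB : ∀ i ∈ B, e i = 0)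
    (hAD : Disjoint A D) :
    (Fintype.piFinset (ts e A D B)).card
      = (Fintype.card F - 2) ^ D.card * (Fintype.card F - 1) ^ B.card := by
  have hDB : Disjoint D B := Finset.disjoint_left.mpr fun i hi hi' => hD i hi (hB i hi')
  rw [Fintype.card_piFinset]
  rw [← Finset.prod_subset (Finset.subset_univ (D ∪ B))
    (f := fun i => (ts e A D B i).card)
    (by
      intro i _ hi
      simp only [mem_union, not_or] at hi
      unfold ts
      by_cases h1 : i ∈ A <;> simp [h1, hi.1, hi.2])]
  rw [Finset.prod_union hDB]
  have e1 : ∀ i ∈ D, (ts e A D B i).card = Fintype.card F - 2 := by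
    intro i hi
    have h1 : i ∉ A := fun h1 => Finset.disjoint_left.mp hAD h1 hi
    simp only [ts, h1, hi, if_true, if_false]
    rw [Finset.card_compl]
    congr 1
    rw [Finset.card_insert_of_notMem (by simp [hD i hi]), Finset.card_singleton]
  have e2 : ∀ i ∈ B, (ts e A D B i).card = Fintype.card F - 1 := by
    intro i hi
    have h1 : i ∉ A := fun h1 => hA i h1 (hB i hi)
    have h2 : i ∉ D := fun h2 => hD i h2 (hB i hi)
    simp [ts, h1, h2, hi, Finset.card_compl]
  rw [Finset.prod_congr rfl e1, Finset.prod_congr rfl e2, Finset.prod_const,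
    Finset.prod_const]

lemma fiber_eq {te tc : ℕ} (e : Fin N → F) (hte : (Se e).card = te)
    (A D B : Finset (Fin N))
    (hA : A ⊆ Se e) (hD : D ⊆ Se e) (hB : ∀ i ∈ B, e i = 0)
    (hAD : Disjoint A D) (hsum : A.card + D.card + B.card = tc) (hBA : B.card = A.card) :
    (univ.filter (fun c : Fin N → F =>
        (hammingNorm c = tc ∧ hammingNorm (e + c) = te)
        ∧ (As e c, Ds e c, Bs e c) = (A, D, B)))
      = Fintype.piFinset (ts e A D B) := by
  have hA' : ∀ i ∈ A, e i ≠ 0 := fun i hi => by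
    have := hA hi; simpa [Se] using this
  have hD' : ∀ i ∈ D, e i ≠ 0 := fun i hi => by
    have := hD hi; simpa [Se] using this
  have hAle : A.card ≤ te := hte ▸ Finset.card_le_card hA
  ext c
  rw [Fintype.mem_piFinset, Finset.mem_filter]
  rw [show ((As e c, Ds e c, Bs e c) = (A, D, B)) ↔
      (As e c = A ∧ Ds e c = D ∧ Bs e c = B) by simp [Prod.ext_iff]]
  rw [shape_eq_iff e c A D B hA' hD' hB hAD]
  simp only [mem_univ, true_and]
  constructor
  · exact fun h => h.2
  · intro h
    refine ⟨⟨?_, ?_⟩, h⟩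
    · obtain ⟨h1, h2, h3⟩ := (shape_eq_iff e c A D B hA' hD' hB hAD).mpr h
      rw [wt_eq e c, h1, h2, h3, hsum]
    · obtain ⟨h1, h2, h3⟩ := (shape_eq_iff e c A D B hA' hD' hB hAD).mpr h
      rw [wt_add_eq e c, h1, h3, hte]
      omega

end Stmt17Aux

namespace Stmt17Aux
variable {F : Type*} [Field F] [Fintype F] [DecidableEq F] {N : ℕ}

def Tset (e : Fin N → F) (tc : ℕ) :
    Finset (Finset (Fin N) × Finset (Fin N) × Finset (Fin N)) :=
  ((Se e).powerset ×ˢ (Se e).powerset ×ˢ ((Se e)ᶜ.powerset)).filter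
    (fun p => Disjoint p.1 p.2.1 ∧ p.1.card + p.2.1.card + p.2.2.card = tc
      ∧ p.2.2.card = p.1.card)

lemma mem_Tset {e : Fin N → F} {tc : ℕ} {p} :
    p ∈ Tset e tc ↔ p.1 ⊆ Se e ∧ p.2.1 ⊆ Se e ∧ p.2.2 ⊆ (Se e)ᶜ
      ∧ Disjoint p.1 p.2.1 ∧ p.1.card + p.2.1.card + p.2.2.card = tc
      ∧ p.2.2.card = p.1.card := by
  simp only [Tset, mem_filter, mem_product, mem_powerset]
  tauto

lemma As_subset (e c : Fin N → F) : As e c ⊆ Se e := by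
  simp only [As, Se, Finset.subset_iff, mem_filter, mem_univ, true_and]; tauto

lemma Ds_subset (e c : Fin N → F) : Ds e c ⊆ Se e := by
  simp only [Ds, Se, Finset.subset_iff, mem_filter, mem_univ, true_and]; tauto

lemma Bs_subset (e c : Fin N → F) : Bs e c ⊆ (Se e)ᶜ := by
  simp only [Bs, Se, Finset.subset_iff, mem_filter, mem_compl, mem_univ, true_and]
  tauto

lemma disjoint_As_Ds (e c : Fin N → F) : Disjoint (As e c) (Ds e c) := by
  simp only [Finset.disjoint_left, As, Ds, mem_filter, mem_univ, true_and]; tauto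

lemma card_Tz (e : Fin N → F) {te tc z : ℕ} (hte : (Se e).card = te) (hz2 : 2 * z ≤ tc) :
    ((Tset e tc).filter (fun p => p.1.card = z)).card
      = te.choose z * ((te - z).choose (tc - 2 * z) * (N - te).choose z) := by
  have hcompl : ((Se e)ᶜ : Finset (Fin N)).card = N - te := by
    rw [Finset.card_compl, hte, Fintype.card_fin]
  rw [show ((Tset e tc).filter (fun p => p.1.card = z)).card
      = (((Se e).powersetCard z).sigma
          (fun A => ((Se e \ A).powersetCard (tc - 2 * z)) ×ˢ
            ((Se e)ᶜ.powersetCard z))).card from ?_]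
  · rw [Finset.card_sigma]
    rw [Finset.sum_congr rfl (fun A hA => ?_), Finset.sum_const,
      Finset.card_powersetCard, hte, smul_eq_mul]
    rw [Finset.mem_powersetCard] at hA
    rw [Finset.card_product, Finset.card_powersetCard, Finset.card_powersetCard,
      Finset.card_sdiff_of_subset hA.1, hte, hA.2, hcompl]
  · apply Finset.card_bij' (fun p _ => (⟨p.1, (p.2.1, p.2.2)⟩ :
      (A : Finset (Fin N)) × (Finset (Fin N) × Finset (Fin N))))
      (fun q _ => (q.1, q.2.1, q.2.2))
    · intro p hp
      rw [Finset.mem_filter] at hp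
      obtain ⟨hp, hz⟩ := hp
      rw [mem_Tset] at hp
      obtain ⟨h1, h2, h3, h4, h5, h6⟩ := hp
      simp only [Finset.mem_sigma, Finset.mem_powersetCard, Finset.mem_product]
      exact ⟨⟨h1, hz⟩, ⟨Finset.subset_sdiff.mpr ⟨h2, h4.symm⟩, by omega⟩,
        h3, by omega⟩
    · intro q hq
      simp only [Finset.mem_sigma, Finset.mem_powersetCard, Finset.mem_product] at hq
      obtain ⟨⟨h1, h2⟩, ⟨h3, h4⟩, h5, h6⟩ := hq
      simp only [Finset.mem_filter, mem_Tset]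
      have hD : q.2.1 ⊆ Se e ∧ Disjoint q.2.1 q.1 := Finset.subset_sdiff.mp h3
      exact ⟨⟨h1, hD.1, h5, hD.2.symm, by omega, by omega⟩, h2⟩
    · intro p _; rfl
    · intro q _; rfl

lemma count_nat {te tc : ℕ} (e : Fin N → F) (he : hammingNorm e = te) :
    (univ.filter (fun c : Fin N → F =>
        hammingNorm c = tc ∧ hammingNorm (e + c) = te)).card
      = ∑ z ∈ Finset.range (tc / 2 + 1),
          te.choose z * (N - te).choose z * (te - z).choose (tc - 2 * z)
            * (Fintype.card F - 2) ^ (tc - 2 * z) * (Fintype.card F - 1) ^ z := by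
  have hte : (Se e).card = te := he
  rw [Finset.card_eq_sum_card_fiberwise
    (f := fun c => (As e c, Ds e c, Bs e c)) (t := Tset e tc) ?_]
  · rw [Finset.sum_congr rfl (g := fun p =>
      (Fintype.card F - 2) ^ p.2.1.card * (Fintype.card F - 1) ^ p.2.2.card)
      (fun p hp => ?_)]
    · -- now regroup by z
      rw [← Finset.sum_fiberwise_of_maps_to (g := fun p => p.1.card)
        (t := Finset.range (tc / 2 + 1)) (fun p hp => ?_)]
      · refine Finset.sum_congr rfl (fun z hz => ?_)
        rw [Finset.mem_range] at hz
        have hz2 : 2 * z ≤ tc := by omega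
        rw [Finset.sum_congr rfl (g := fun _ =>
          (Fintype.card F - 2) ^ (tc - 2 * z) * (Fintype.card F - 1) ^ z)
          (fun p hp => ?_), Finset.sum_const, card_Tz e hte hz2, smul_eq_mul]
        · ring
        · rw [Finset.mem_filter, mem_Tset] at hp
          obtain ⟨⟨-, -, -, -, h5, h6⟩, hzz⟩ := hp
          rw [show p.2.1.card = tc - 2 * z by omega, show p.2.2.card = z by omega]
      · rw [mem_Tset] at hp
        rw [Finset.mem_range]
        omega
    · obtain ⟨A, D, B⟩ := p
      rw [mem_Tset] at hp
      obtain ⟨h1, h2, h3, h4, h5, h6⟩ := hp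
      dsimp only at h1 h2 h3 h4 h5 h6 ⊢
      have hB : ∀ i ∈ B, e i = 0 := by
        intro i hi
        have := h3 hi
        simpa [Se] using this
      rw [Finset.filter_filter, fiber_eq e hte A D B h1 h2 hB h4 h5 h6]
      exact card_ts e A D B
        (fun i hi => by simpa [Se] using h1 hi)
        (fun i hi => by simpa [Se] using h2 hi) hB h4
  · intro c hc
    rw [Finset.mem_coe, Finset.mem_filter] at hc
    obtain ⟨-, hc1, hc2⟩ := hc
    rw [Finset.mem_coe, mem_Tset]
    have h1 := As_subset e c
    have h2 := Ds_subset e c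
    have h3 := Bs_subset e c
    have h4 := disjoint_As_Ds e c
    have h5 : (As e c).card + (Ds e c).card + (Bs e c).card = tc := by
      rw [← wt_eq e c, hc1]
    have hAle : (As e c).card ≤ te := hte ▸ Finset.card_le_card h1
    have h6 : (Bs e c).card = (As e c).card := by
      have := wt_add_eq e c
      rw [hc2, hte] at this
      omega
    exact ⟨h1, h2, h3, h4, h5, h6⟩

end Stmt17Aux

/-- Probability that adding a uniformly random weight-t_c vector to a fixed weight-t_e
vector preserves the weight. -/
theorem stmt17 {F : Type*} [Field F] [Fintype F] [DecidableEq F] {N te tc : ℕ}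
    (e : Fin N → F) (he : hammingNorm e = te) :
    ((Finset.univ.filter (fun c : Fin N → F =>
        hammingNorm c = tc ∧ hammingNorm (e + c) = te)).card : ℚ)
        / ((N.choose tc : ℚ) * ((Fintype.card F : ℚ) - 1) ^ tc)
      = ∑ z ∈ Finset.range (tc / 2 + 1),
          ((te.choose z : ℚ) * (((N - te).choose z : ℕ) : ℚ)
              * (((te - z).choose (tc - 2 * z) : ℕ) : ℚ)
              * ((Fintype.card F : ℚ) - 2) ^ (tc - 2 * z))
            / ((N.choose tc : ℚ) * ((Fintype.card F : ℚ) - 1) ^ (tc - z)) := by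
  have hq : 2 ≤ Fintype.card F := Fintype.one_lt_card
  have hr1 : ((Fintype.card F : ℚ) - 1) = ((Fintype.card F - 1 : ℕ) : ℚ) := by
    rw [Nat.cast_sub (by omega)]; push_cast; ring
  have hr2 : ((Fintype.card F : ℚ) - 2) = ((Fintype.card F - 2 : ℕ) : ℚ) := by
    rw [Nat.cast_sub hq]; push_cast; ring
  have hrne : ((Fintype.card F - 1 : ℕ) : ℚ) ≠ 0 := by
    have : 1 ≤ Fintype.card F - 1 := by omega
    positivity
  rw [Stmt17Aux.count_nat e he]
  by_cases hC : N.choose tc = 0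
  · simp [hC]
  · have hCb : (N.choose tc : ℚ) ≠ 0 := Nat.cast_ne_zero.mpr hC
    have hrne' : ((Fintype.card F : ℚ) - 1) ≠ 0 := by rw [hr1]; exact hrne
    rw [Nat.cast_sum, Finset.sum_div]
    refine Finset.sum_congr rfl (fun z hz => ?_)
    rw [Finset.mem_range] at hz
    have hzle : z ≤ tc := by omega
    have hpow : ((Fintype.card F : ℚ) - 1) ^ tc
        = ((Fintype.card F : ℚ) - 1) ^ (tc - z) * ((Fintype.card F : ℚ) - 1) ^ z := by
      rw [← pow_add]
      congr 1
      omega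
    rw [Nat.cast_mul, Nat.cast_mul, Nat.cast_mul, Nat.cast_mul, Nat.cast_pow,
      Nat.cast_pow, ← hr1, ← hr2, hpow]
    rw [div_eq_div_iff
      (mul_ne_zero hCb (mul_ne_zero (pow_ne_zero _ hrne') (pow_ne_zero _ hrne')))
      (mul_ne_zero hCb (pow_ne_zero _ hrne'))]
    ring
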